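/- Let the cell averages in the three-cell stencil lie exactly on the stationary solution: Q_j^n = Q^E(r_j) for j ∈ {i−1, i, i+1}. Then the second-order well balanced reconstruction q_i^n(r,t) = Q^E(r) + Q_i^{f,n} + (ΔQ_i^{f,n}/Δr)(r − r_i) + ∂tQ_i^n·(t − t^n) reproduces the stationary solution exactly: (i) the fluctuations Q_j^{f,n} = Q_j^n − Q^E(r_j) vanish for j = i−1, i, i+1, hence the limited slope ΔQ_i^{f,n} = minmod(Q_i^{f,n} − Q_{i−1}^{f,n}, Q_{i+1}^{f,n} − Q_i^{f,n}) is zero; (ii) the discrete time derivative ∂tQ_i^n = −( f(q^{n,-}_{i+1/2}) − f(q^{n,+}_{i−1/2}) )/Δr − B_i/Δr, evaluated with the boundary-extrapolated values of the reconstruction, vanishes, because the boundary-extrapolated values equal the equilibrium values (so u = 0 makes the flux differences zero, and all fluctuation terms in B_i = (0, b₂^i, b₃^i, b₄^i, 0) with b₂^i = r_i(P^{f,-}_{i+1/2} − P^{f,+}_{i−1/2}) + r_iρ^E_i(ζ_r^f)_i + r_iρ^f_i(ζ_r)_i, b₃^i = ρ_i u_i v_i, b₄^i = ρ_i u_i G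 m_s/r_i vanish). Consequently q_i^n(r,t) = Q^E(r) for all r in cell I_i and all t. -/

import Mathlib

/-! Second-order well balanced MUSCL reconstruction for the one-dimensional
cylindrical Euler system with gravity.  Conserved states are
`q = (rρ, rρu, rρv, rρE, r) ∈ ℝ⁵`. -/

/-- Pressure of a conserved state vector. -/
noncomputable def presQ (γ : ℝ) (q : Fin 5 → ℝ) : ℝ :=
  (γ - 1) * (q 0 / q 4) * (q 3 / q 0 - ((q 1 / q 0) ^ 2 + (q 2 / q 0) ^ 2) / 2)

/-- Flux `f(q) = (rρu, rρu², rρuv, ru(ρE+P), 0)` of a conserved state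
vector. -/
noncomputable def fQ (γ : ℝ) (q : Fin 5 → ℝ) : Fin 5 → ℝ :=
  ![q 1, q 1 * (q 1 / q 0), q 1 * (q 2 / q 0),
    q 4 * (q 1 / q 0) * ((q 0 / q 4) * (q 3 / q 0) + presQ γ q), 0]

/-- Conserved vector of the prescribed stationary solution at radius `r`. -/
def QE (ρE vE EE : ℝ → ℝ) (r : ℝ) : Fin 5 → ℝ :=
  ![r * ρE r, 0, r * ρE r * vE r, r * ρE r * EE r, r]

/-- Equilibrium pressure `P^E(r)`. -/
noncomputable def presE (γ : ℝ) (ρE vE EE : ℝ → ℝ) (r : ℝ) : ℝ :=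
  (γ - 1) * ρE r * (EE r - (vE r) ^ 2 / 2)

/-- minmod limiter: `0` if `ab ≤ 0`, `a` if `|a| < |b|`, else `b`. -/
noncomputable def minmod (x y : ℝ) : ℝ :=
  if x * y ≤ 0 then 0 else if |x| < |y| then x else y


lemma presQ_QE (γ : ℝ) (ρE vE EE : ℝ → ℝ) (r : ℝ) (hr : r ≠ 0) (hρ : ρE r ≠ 0) :
    presQ γ (QE ρE vE EE r) = presE γ ρE vE EE r := by
  simp only [presQ, presE, QE]
  simp only [Matrix.cons_val_zero, Matrix.cons_val_one, Matrix.head_cons,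
    Matrix.cons_val_two, Matrix.tail_cons, Matrix.cons_val_three, Matrix.cons_val_four]
  field_simp
  ring

lemma fQ_QE (γ : ℝ) (ρE vE EE : ℝ → ℝ) (r : ℝ) :
    fQ γ (QE ρE vE EE r) = 0 := by
  funext k
  fin_cases k <;> simp [fQ, QE]

/-- if the three cell averages of the stencil lie exactly on
the stationary solution, then the second-order well balanced reconstruction
`q_i^n(r,t) = Q^E(r) + Q_i^{f,n} + (ΔQ_i^{f,n}/Δr)(r - r_i) + ∂ₜQ_i^n (t-tⁿ)`
reproduces the stationary solution exactly: the fluctuations vanish, the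
minmod-limited slope is zero, the discrete time derivative (computed from the
boundary-extrapolated values) vanishes, and `q_i^n(r,t) = Q^E(r)` for all
`r`, `t`. -/
theorem wb_reconstruction_reproduces_equilibrium
    (γ G ms : ℝ) (hγ : 1 < γ)
    (ρE vE EE : ℝ → ℝ) (hρE : ∀ x : ℝ, 0 < ρE x)
    (ri Δr tn : ℝ) (hri : 0 < ri) (hΔr : 0 < Δr) (hpos : 0 < ri - Δr)
    (Qm Qi Qp : Fin 5 → ℝ)
    (hm : Qm = QE ρE vE EE (ri - Δr))
    (hi : Qi = QE ρE vE EE ri)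
    (hp : Qp = QE ρE vE EE (ri + Δr)) :
    -- fluctuations relative to the stationary solution
    let Qfm := Qm - QE ρE vE EE (ri - Δr)
    let Qfi := Qi - QE ρE vE EE ri
    let Qfp := Qp - QE ρE vE EE (ri + Δr)
    -- minmod-limited slope of the fluctuations
    let slope : Fin 5 → ℝ := fun k => minmod (Qfi k - Qfm k) (Qfp k - Qfi k)
    -- boundary-extrapolated values q^{n,+}_{i-1/2}, q^{n,-}_{i+1/2}
    let qL := QE ρE vE EE (ri - Δr / 2) + Qfi - (1 / 2 : ℝ) • slope
    let qR := QE ρE vE EE (ri + Δr / 2) + Qfi + (1 / 2 : ℝ) • slope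
    -- primitive cell values
    let ρi := Qi 0 / Qi 4
    let ui := Qi 1 / Qi 0
    let vi := Qi 2 / Qi 0
    -- components of B_i
    let b2 := ri * ((presQ γ qR - presE γ ρE vE EE (ri + Δr / 2))
        - (presQ γ qL - presE γ ρE vE EE (ri - Δr / 2)))
      + ri * ρE ri * (((vE ri) ^ 2 - vi ^ 2) / ri)
      + ri * (ρi - ρE ri) * (G * ms / ri ^ 2 - vi ^ 2 / ri)
    let b3 := ρi * ui * vi
    let b4 := ρi * ui * (G * ms / ri)
    let Bi : Fin 5 → ℝ := ![0, b2, b3, b4, 0]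
    -- discrete time derivative
    let dtQ := -(Δr)⁻¹ • (fQ γ qR - fQ γ qL) - (Δr)⁻¹ • Bi
    Qfm = 0 ∧ Qfi = 0 ∧ Qfp = 0 ∧ slope = 0 ∧ dtQ = 0 ∧
    (∀ r' t : ℝ,
      QE ρE vE EE r' + Qfi + ((r' - ri) / Δr) • slope + (t - tn) • dtQ
        = QE ρE vE EE r') := by
  subst hm hi hp
  intro Qfm Qfi Qfp slope qL qR ρi ui vi b2 b3 b4 Bi dtQ
  have hρi : ρE ri ≠ 0 := (hρE ri).ne'
  have hri0 : ri ≠ 0 := hri.ne'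
  have hrm : ri - Δr / 2 ≠ 0 := by nlinarith [hΔr.le]
  have hrp : ri + Δr / 2 ≠ 0 := by positivity
  have hQfm : Qfm = 0 := sub_self _
  have hQfi : Qfi = 0 := sub_self _
  have hQfp : Qfp = 0 := sub_self _
  have hslope : slope = 0 := by
    funext k
    simp [slope, hQfi, hQfm, hQfp, minmod]
  have hqL : qL = QE ρE vE EE (ri - Δr / 2) := by
    simp [qL, hQfi, hslope]
  have hqR : qR = QE ρE vE EE (ri + Δr / 2) := by
    simp [qR, hQfi, hslope]
  have hui : ui = 0 := by simp [ui, QE]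
  have hvi : vi = vE ri := by
    simp only [vi, QE, Matrix.cons_val_zero, Matrix.cons_val_two, Matrix.tail_cons,
      Matrix.head_cons]
    field_simp
  have hρi' : ρi = ρE ri := by
    simp only [ρi, QE, Matrix.cons_val_zero, Matrix.cons_val_four, Matrix.cons_val_succ,
      Matrix.tail_cons, Matrix.head_cons]
    field_simp
  have hb2 : b2 = 0 := by
    simp only [b2, hqL, hqR, presQ_QE γ ρE vE EE _ hrm (hρE _).ne',
      presQ_QE γ ρE vE EE _ hrp (hρE _).ne', hvi, hρi']
    ring
  have hb3 : b3 = 0 := by simp [b3, hui]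
  have hb4 : b4 = 0 := by simp [b4, hui]
  have hBi : Bi = 0 := by
    funext k
    fin_cases k <;> simp [Bi, hb2, hb3, hb4]
  have hdtQ : dtQ = 0 := by
    simp [dtQ, hqL, hqR, fQ_QE, hBi]
  refine ⟨hQfm, hQfi, hQfp, hslope, hdtQ, fun r' t => by simp [hQfi, hslope, hdtQ]⟩
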